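/- Let A = [[A₁, 0],[D, A₂]] be a block lower triangular real Hurwitz matrix and B = [[B₁],[B₂]] a conformally partitioned matrix, and let P = [[P₁, Qᵀ],[Q, P₂]] be the corresponding solution of AP + PAᵀ + BBᵀ = 0 with P₁ invertible. Set T = Q P₁⁻¹, Π = P₂ - T Qᵀ, and B̃₂ = B₂ - T B₁. Then Π satisfies the Lyapunov equation A₂ Π + Π A₂ᵀ + B̃₂ B̃₂ᵀ = 0. -/

import Mathlib

open Matrix Polynomial

/-- A real square matrix is Hurwitz if all eigenvalues (over `ℂ`) have negative real part. -/
def Matrix.IsHurwitz {N : Type*} [Fintype N] [DecidableEq N]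
    (A : Matrix N N ℝ) : Prop :=
  ∀ z ∈ spectrum ℂ (A.map (algebraMap ℝ ℂ)), z.re < 0

lemma mem_spectrum_of_root_charpoly {n : Type*} [Fintype n] [DecidableEq n]
    (M : Matrix n n ℂ) (k : ℂ) (h : (Matrix.charpoly M).eval k = 0) :
    k ∈ spectrum ℂ M := by
  rw [spectrum.mem_iff, Matrix.isUnit_iff_isUnit_det, isUnit_iff_ne_zero, not_not]
  have e : (algebraMap ℂ (Matrix n n ℂ) k - M) = (charmatrix M).map (evalRingHom k) := by
    ext i j
    by_cases hij : i = j <;>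
      simp [hij, charmatrix_apply, Matrix.algebraMap_eq_diagonal, Matrix.diagonal_apply,
        Matrix.map_apply, Matrix.sub_apply]
  rw [e, ← RingHom.mapMatrix_apply, ← RingHom.map_det]
  simpa [Matrix.charpoly] using h

lemma spectrum_transpose {n : Type*} [Fintype n] [DecidableEq n] (M : Matrix n n ℂ) :
    spectrum ℂ Mᵀ = spectrum ℂ M := by
  ext z
  simp only [spectrum.mem_iff, Matrix.isUnit_iff_isUnit_det]
  have e : algebraMap ℂ (Matrix n n ℂ) z - Mᵀ = (algebraMap ℂ (Matrix n n ℂ) z - M)ᵀ := by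
    rw [transpose_sub, Matrix.algebraMap_eq_diagonal, diagonal_transpose]
  rw [e, Matrix.det_transpose]

lemma lyap_unique {n : ℕ} (A : Matrix (Fin n) (Fin n) ℝ) (hA : A.IsHurwitz)
    (S : Matrix (Fin n) (Fin n) ℝ) (h : A * S + S * Aᵀ = 0) : S = 0 := by
  rcases Nat.eq_zero_or_pos n with hn | hn
  · subst hn; exact Subsingleton.elim _ _
  set f := algebraMap ℝ ℂ with hf
  set M : Matrix (Fin n) (Fin n) ℂ := A.map f with hM
  set Sc : Matrix (Fin n) (Fin n) ℂ := S.map f with hSc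
  have hmap := congrArg (f.mapMatrix) h
  simp only [map_add, _root_.map_mul, map_zero, RingHom.mapMatrix_apply] at hmap
  rw [Matrix.transpose_map] at hmap
  have hMS : M * Sc = Sc * (-Mᵀ) := by
    rw [mul_neg, ← hM, ← hSc, eq_neg_iff_add_eq_zero] at *
    exact hmap
  have hpow : ∀ k : ℕ, M ^ k * Sc = Sc * (-Mᵀ) ^ k := by
    intro k
    induction k with
    | zero => simp
    | succ k ih =>
        rw [pow_succ', mul_assoc, ih, ← mul_assoc, hMS, mul_assoc, ← pow_succ']
  have key : ∀ p : ℂ[X], aeval M p * Sc = Sc * aeval (-Mᵀ) p := by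
    intro p
    induction p using Polynomial.induction_on' with
    | add p q hp hq => simp [map_add, add_mul, mul_add, hp, hq]
    | monomial k c =>
        simp only [aeval_monomial, Algebra.algebraMap_eq_smul_one, smul_mul_assoc, one_mul,
          mul_smul_comm]
        rw [hpow k]
  set p := M.charpoly with hp
  have hzero : Sc * aeval (-Mᵀ) p = 0 := by
    rw [← key, Matrix.aeval_self_charpoly, zero_mul]
  have hunit : IsUnit (aeval (-Mᵀ) p) := by
    rw [← spectrum.zero_notMem_iff ℂ]
    intro h0
    rw [spectrum.map_polynomial_aeval_of_degree_pos (-Mᵀ) p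
      (by rw [hp, Matrix.charpoly_degree_eq_dim]; simpa using hn)] at h0
    obtain ⟨k, hk, hk0⟩ := h0
    have hkM : k ∈ spectrum ℂ M := mem_spectrum_of_root_charpoly M k hk0
    have hkre : k.re < 0 := hA k hkM
    have hnegk : -k ∈ spectrum ℂ M := by
      rw [← spectrum_transpose]
      rw [← spectrum.neg_eq] at hk
      exact Set.mem_neg.mp hk
    have := hA (-k) hnegk
    simp [Complex.neg_re] at this
    linarith
  have hSc0 : Sc = 0 := by
    have := congrArg (fun X => X * (↑hunit.unit⁻¹ : Matrix (Fin n) (Fin n) ℂ)) hzero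
    simpa [mul_assoc, Matrix.mul_nonsing_inv _ ((Matrix.isUnit_iff_isUnit_det _).mp hunit)]
      using this
  ext i j
  have := congrFun (congrFun hSc0 i) j
  simpa [hSc, Matrix.map_apply, hf] using this

lemma hurwitz_block₁₁ {n₁ n₂ : ℕ} (A₁ : Matrix (Fin n₁) (Fin n₁) ℝ)
    (A₂ : Matrix (Fin n₂) (Fin n₂) ℝ) (D : Matrix (Fin n₂) (Fin n₁) ℝ)
    (hA : (Matrix.fromBlocks A₁ 0 D A₂).IsHurwitz) : A₁.IsHurwitz := by
  intro z hz
  apply hA z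
  rw [spectrum.mem_iff, Matrix.isUnit_iff_isUnit_det, isUnit_iff_ne_zero, not_not] at hz ⊢
  have e : algebraMap ℂ (Matrix (Fin n₁ ⊕ Fin n₂) (Fin n₁ ⊕ Fin n₂) ℂ) z -
      (Matrix.fromBlocks A₁ 0 D A₂).map (algebraMap ℝ ℂ) =
      Matrix.fromBlocks (algebraMap ℂ (Matrix (Fin n₁) (Fin n₁) ℂ) z - A₁.map (algebraMap ℝ ℂ)) 0
        (-(D.map (algebraMap ℝ ℂ)))
        (algebraMap ℂ (Matrix (Fin n₂) (Fin n₂) ℂ) z - A₂.map (algebraMap ℝ ℂ)) := by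
    rw [Matrix.fromBlocks_map]
    simp only [Matrix.algebraMap_eq_diagonal, ← Matrix.fromBlocks_diagonal]
    ext (i | i) (j | j) <;>
      simp [Matrix.fromBlocks, Matrix.sub_apply, Matrix.map_apply, Matrix.diagonal_apply,
        Pi.algebraMap_apply]
  rw [e, Matrix.det_fromBlocks_zero₁₂, hz, zero_mul]

theorem schur_complement_lyapunov {n₁ n₂ m : ℕ}
    (A₁ : Matrix (Fin n₁) (Fin n₁) ℝ) (A₂ : Matrix (Fin n₂) (Fin n₂) ℝ)
    (D : Matrix (Fin n₂) (Fin n₁) ℝ)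
    (B₁ : Matrix (Fin n₁) (Fin m) ℝ) (B₂ : Matrix (Fin n₂) (Fin m) ℝ)
    (P₁ : Matrix (Fin n₁) (Fin n₁) ℝ) (P₂ : Matrix (Fin n₂) (Fin n₂) ℝ)
    (Q : Matrix (Fin n₂) (Fin n₁) ℝ)
    (hA : (Matrix.fromBlocks A₁ 0 D A₂).IsHurwitz)
    (hLyap : (Matrix.fromBlocks A₁ 0 D A₂) * (Matrix.fromBlocks P₁ Qᵀ Q P₂) +
        (Matrix.fromBlocks P₁ Qᵀ Q P₂) * (Matrix.fromBlocks A₁ 0 D A₂)ᵀ +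
        (Matrix.fromRows B₁ B₂) * (Matrix.fromRows B₁ B₂)ᵀ = 0)
    (hP₁ : IsUnit P₁.det) :
    letI T : Matrix (Fin n₂) (Fin n₁) ℝ := Q * P₁⁻¹
    letI Sc : Matrix (Fin n₂) (Fin n₂) ℝ := P₂ - T * Qᵀ
    letI Bt : Matrix (Fin n₂) (Fin m) ℝ := B₂ - T * B₁
    A₂ * Sc + Sc * A₂ᵀ + Bt * Btᵀ = 0 := by
  -- extract the four block equations
  rw [Matrix.fromBlocks_transpose, Matrix.transpose_fromRows, Matrix.fromBlocks_multiply,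
    Matrix.fromBlocks_multiply, Matrix.fromRows_mul_fromCols, Matrix.fromBlocks_add,
    Matrix.fromBlocks_add, ← Matrix.fromBlocks_zero, Matrix.fromBlocks_inj] at hLyap
  obtain ⟨e11, e12, e21, e22⟩ := hLyap
  simp only [transpose_zero, Matrix.zero_mul, Matrix.mul_zero, add_zero, zero_add]
    at e11 e12 e21 e22
  -- P₁ is symmetric
  have hA₁ : A₁.IsHurwitz := hurwitz_block₁₁ A₁ A₂ D hA
  have hsym : P₁ᵀ = P₁ := by
    have t := congrArg Matrix.transpose e11
    simp only [transpose_add, transpose_mul, transpose_transpose, transpose_zero] at t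
    have h0 : A₁ * (P₁ - P₁ᵀ) + (P₁ - P₁ᵀ) * A₁ᵀ =
        (A₁ * P₁ + P₁ * A₁ᵀ + B₁ * B₁ᵀ) - (P₁ᵀ * A₁ᵀ + A₁ * P₁ᵀ + B₁ * B₁ᵀ) := by
      noncomm_ring
    have h1 : A₁ * (P₁ - P₁ᵀ) + (P₁ - P₁ᵀ) * A₁ᵀ = 0 := by rw [h0, e11, t, sub_zero]
    have := lyap_unique A₁ hA₁ _ h1
    rw [sub_eq_zero] at this
    exact this.symm
  -- inverse facts
  set N : Matrix (Fin n₁) (Fin n₁) ℝ := P₁⁻¹ with hN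
  have hPN : P₁ * N = 1 := Matrix.mul_nonsing_inv _ hP₁
  have hNP : N * P₁ = 1 := Matrix.nonsing_inv_mul _ hP₁
  have hNT : Nᵀ = N := by rw [hN, Matrix.transpose_nonsing_inv, hsym]
  have c1 : ∀ {k : Type} (X : Matrix (Fin n₁) k ℝ), P₁ * (N * X) = X := by
    intro k X; rw [← Matrix.mul_assoc, hPN, Matrix.one_mul]
  have c2 : ∀ {k : Type} (X : Matrix (Fin n₁) k ℝ), N * (P₁ * X) = X := by
    intro k X; rw [← Matrix.mul_assoc, hNP, Matrix.one_mul]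
  show A₂ * (P₂ - Q * N * Qᵀ) + (P₂ - Q * N * Qᵀ) * A₂ᵀ +
      (B₂ - Q * N * B₁) * (B₂ - Q * N * B₁)ᵀ = 0
  have key : A₂ * (P₂ - Q * N * Qᵀ) + (P₂ - Q * N * Qᵀ) * A₂ᵀ +
      (B₂ - Q * N * B₁) * (B₂ - Q * N * B₁)ᵀ
      = (D * Qᵀ + A₂ * P₂ + (Q * Dᵀ + P₂ * A₂ᵀ) + B₂ * B₂ᵀ)
        - (D * P₁ + A₂ * Q + Q * A₁ᵀ + B₂ * B₁ᵀ) * (N * Qᵀ)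
        - (Q * N) * (A₁ * Qᵀ + (P₁ * Dᵀ + Qᵀ * A₂ᵀ) + B₁ * B₂ᵀ)
        + (Q * N) * (A₁ * P₁ + P₁ * A₁ᵀ + B₁ * B₁ᵀ) * (N * Qᵀ) := by
    simp only [transpose_sub, transpose_mul, transpose_transpose, hNT,
      Matrix.mul_add, Matrix.add_mul, Matrix.mul_sub, Matrix.sub_mul, Matrix.mul_assoc, c1, c2]
    abel
  rw [key, e21, e12, e22, e11]
  simp
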